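/- For a non-optimal feasible flow x, the smallest ε ≥ 0 for which x is ε-optimal equals the negative of the minimum mean cost of a directed cycle in the residual network G_x; for an optimal flow x, this value is 0. -/

import Mathlib

open Finset

variable {V A : Type}

/-- Excess of node `i` with respect to pseudoflow `x` and supplies `b`. -/
def excess [Fintype A] [DecidableEq V] (src tgt : A → V) (b : V → ℤ)
    (x : A → ℤ) (i : V) : ℤ :=
  b i + ∑ a ∈ Finset.univ.filter (fun a => tgt a = i), x a
      - ∑ a ∈ Finset.univ.filter (fun a => src a = i), x a

/-- A pseudoflow obeys the nonnegativity and capacity constraints. -/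
def IsPseudoflow (cap x : A → ℤ) : Prop := ∀ a, 0 ≤ x a ∧ x a ≤ cap a

/-- A feasible flow: pseudoflow satisfying the conservation constraints. -/
def IsFeasible [Fintype A] [DecidableEq V] (src tgt : A → V) (b : V → ℤ)
    (cap x : A → ℤ) : Prop :=
  IsPseudoflow cap x ∧ ∀ i, excess src tgt b x i = 0

/-- Total cost of a flow. -/
def flowCost [Fintype A] (c x : A → ℤ) : ℤ := ∑ a, c a * x a

/-- An optimal solution of the minimum-cost flow problem. -/
def IsOptimal [Fintype A] [DecidableEq V] (src tgt : A → V) (b : V → ℤ)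
    (cap c x : A → ℤ) : Prop :=
  IsFeasible src tgt b cap x ∧
    ∀ y, IsFeasible src tgt b cap y → flowCost c x ≤ flowCost c y

/-- Source of a residual arc: `(a, true)` is the forward copy of `a`,
`(a, false)` the backward copy. -/
def rsrc (src tgt : A → V) (p : A × Bool) : V := if p.2 then src p.1 else tgt p.1

/-- Target of a residual arc. -/
def rtgt (src tgt : A → V) (p : A × Bool) : V := if p.2 then tgt p.1 else src p.1

/-- Cost of a residual arc. -/
def rcost (c : A → ℤ) (p : A × Bool) : ℤ := if p.2 then c p.1 else -c p.1

/-- Whether a (forward/backward) arc is present in the residual network of `x`. -/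
def IsResidual (cap x : A → ℤ) (p : A × Bool) : Prop :=
  if p.2 then x p.1 < cap p.1 else 0 < x p.1

/-- Reduced cost of a residual arc with respect to potentials `π`. -/
def redcost (src tgt : A → V) (c : A → ℤ) (π : V → ℝ) (p : A × Bool) : ℝ :=
  (rcost c p : ℝ) + π (rsrc src tgt p) - π (rtgt src tgt p)

/-- A directed cycle (closed directed walk), given by `k > 0` arcs in cyclic order. -/
def IsCycle {E : Type} (s t : E → V) {k : ℕ} (hk : 0 < k) (cyc : Fin k → E) : Prop :=
  ∀ i : Fin k, t (cyc i) = s (cyc ⟨(i.1 + 1) % k, Nat.mod_lt _ hk⟩)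

/-- Underlying undirected (simple) graph of the arcs in `T`. -/
def underlying (src tgt : A → V) (T : Finset A) : SimpleGraph V where
  Adj i j := i ≠ j ∧ ∃ a ∈ T, (src a = i ∧ tgt a = j) ∨ (src a = j ∧ tgt a = i)
  symm := ⟨by
    rintro i j ⟨hij, a, haT, h⟩
    exact ⟨hij.symm, a, haT, h.symm⟩⟩
  loopless := ⟨by rintro i ⟨h, -⟩; exact h rfl⟩

/-- Total excess of the excess nodes. -/
def totalExcess [Fintype V] [Fintype A] [DecidableEq V]
    (src tgt : A → V) (b : V → ℤ) (x : A → ℤ) : ℤ :=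
  ∑ i ∈ Finset.univ.filter (fun i => 0 < excess src tgt b x i), excess src tgt b x i

section W2
def RW (src tgt : A → V) (cap x : A → ℤ) : V → List (A × Bool) → V → Prop
  | v, [], u => v = u
  | v, p :: r, u => IsResidual cap x p ∧ rtgt src tgt p = v ∧ RW src tgt cap x (rsrc src tgt p) r u

def wcost (f : A × Bool → ℝ) (r : List (A × Bool)) : ℝ := (r.map f).sum

open scoped Classical in
noncomputable def dfun [Fintype A] (src tgt : A → V) (cap x : A → ℤ)
    (f : A × Bool → ℝ) : ℕ → V → ℝ
  | 0 => fun _ => 0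
  | (n+1) => fun v =>
      Finset.univ.inf' ⟨none, Finset.mem_univ _⟩ fun o : Option (A × Bool) =>
        match o with
        | none => dfun src tgt cap x f n v
        | some p => if IsResidual cap x p ∧ rtgt src tgt p = v
            then dfun src tgt cap x f n (rsrc src tgt p) + f p
            else dfun src tgt cap x f n v

variable [Fintype A] {src tgt : A → V} {cap x : A → ℤ} {f : A × Bool → ℝ}

lemma dfun_succ_le (n : ℕ) (v : V) :
    dfun src tgt cap x f (n+1) v ≤ dfun src tgt cap x f n v := by
  classical
  exact Finset.inf'_le _ (Finset.mem_univ (none : Option (A × Bool)))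

lemma dfun_anti {m n : ℕ} (h : m ≤ n) (v : V) :
    dfun src tgt cap x f n v ≤ dfun src tgt cap x f m v := by
  induction n with
  | zero =>
    have : m = 0 := by omega
    subst this; rfl
  | succ n ih =>
    rcases Nat.lt_or_ge m (n+1) with hm | hm
    · exact (dfun_succ_le n v).trans (ih (by omega))
    · have : m = n + 1 := by omega
      subst this; rfl

open scoped Classical in
lemma dfun_le_step {p : A × Bool} (hp : IsResidual cap x p) (n : ℕ) :
    dfun src tgt cap x f (n+1) (rtgt src tgt p) ≤
      dfun src tgt cap x f n (rsrc src tgt p) + f p := by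
  have h : dfun src tgt cap x f (n+1) (rtgt src tgt p) ≤
      if IsResidual cap x p ∧ rtgt src tgt p = rtgt src tgt p
        then dfun src tgt cap x f n (rsrc src tgt p) + f p
        else dfun src tgt cap x f n (rtgt src tgt p) :=
    Finset.inf'_le _ (Finset.mem_univ (some p))
  rwa [if_pos ⟨hp, rfl⟩] at h

lemma dfun_le_wcost {v u : V} {r : List (A × Bool)} (h : RW src tgt cap x v r u)
    {n : ℕ} (hn : r.length ≤ n) : dfun src tgt cap x f n v ≤ wcost f r := by
  induction r generalizing v n with
  | nil =>
    have : wcost f ([] : List (A × Bool)) = 0 := by simp [wcost]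
    rw [this]
    exact dfun_anti (Nat.zero_le n) v
  | cons p r ih =>
    obtain ⟨hres, hv, hr⟩ := h
    cases n with
    | zero => simp at hn
    | succ n =>
      have h1 : dfun src tgt cap x f (n+1) v ≤ dfun src tgt cap x f n (rsrc src tgt p) + f p := by
        rw [← hv]; exact dfun_le_step hres n
      have h2 := ih hr (n := n) (by simpa using hn)
      have : wcost f (p :: r) = f p + wcost f r := by simp [wcost]
      rw [this]
      linarith

lemma dfun_attained (n : ℕ) (v : V) :
    ∃ u r, RW src tgt cap x v r u ∧ r.length ≤ n ∧ wcost f r = dfun src tgt cap x f n v := by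
  classical
  induction n generalizing v with
  | zero => exact ⟨v, [], rfl, by simp, by simp [wcost, dfun]⟩
  | succ n ih =>
    obtain ⟨o, -, ho⟩ := Finset.exists_mem_eq_inf' (⟨none, Finset.mem_univ _⟩ :
      (Finset.univ : Finset (Option (A × Bool))).Nonempty)
      (fun o : Option (A × Bool) =>
        match o with
        | none => dfun src tgt cap x f n v
        | some p => if IsResidual cap x p ∧ rtgt src tgt p = v
            then dfun src tgt cap x f n (rsrc src tgt p) + f p
            else dfun src tgt cap x f n v)
    have hd : dfun src tgt cap x f (n+1) v = _ := ho
    match o with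
    | none =>
      obtain ⟨u, r, hrw, hlen, hc⟩ := ih v
      exact ⟨u, r, hrw, hlen.trans (Nat.le_succ n), by rw [hc, hd]⟩
    | some p =>
      have hd' : dfun src tgt cap x f (n+1) v =
          if IsResidual cap x p ∧ rtgt src tgt p = v
            then dfun src tgt cap x f n (rsrc src tgt p) + f p
            else dfun src tgt cap x f n v := hd
      by_cases hcond : IsResidual cap x p ∧ rtgt src tgt p = v
      · obtain ⟨u, r, hrw, hlen, hc⟩ := ih (rsrc src tgt p)
        refine ⟨u, p :: r, ⟨hcond.1, hcond.2, hrw⟩, by simpa using hlen, ?_⟩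
        rw [hd', if_pos hcond]
        simp [wcost] at hc ⊢
        rw [hc]; ring
      · obtain ⟨u, r, hrw, hlen, hc⟩ := ih v
        refine ⟨u, r, hrw, hlen.trans (Nat.le_succ n), ?_⟩
        rw [hd', if_neg hcond, hc]
end W2
section W3
variable [Fintype A] {src tgt : A → V} {cap x : A → ℤ} {f : A × Bool → ℝ}

lemma RW_unique {v v' u : V} {r : List (A × Bool)} (h : RW src tgt cap x v r u)
    (h' : RW src tgt cap x v' r u) : v = v' := by
  cases r with
  | nil => exact h.trans h'.symm
  | cons p r => exact h.2.1.symm.trans h'.2.1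

lemma RW_append {v u : V} {r₁ r₂ : List (A × Bool)} :
    RW src tgt cap x v (r₁ ++ r₂) u ↔
      ∃ w, RW src tgt cap x v r₁ w ∧ RW src tgt cap x w r₂ u := by
  induction r₁ generalizing v with
  | nil =>
    simp only [List.nil_append, RW]
    constructor
    · intro h; exact ⟨v, rfl, h⟩
    · rintro ⟨w, rfl, h⟩; exact h
  | cons p r ih =>
    simp only [List.cons_append, RW]
    constructor
    · rintro ⟨hres, hv, h⟩
      obtain ⟨w, h1, h2⟩ := ih.mp h
      exact ⟨w, ⟨hres, hv, h1⟩, h2⟩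
    · rintro ⟨w, ⟨hres, hv, h1⟩, h2⟩
      exact ⟨hres, hv, ih.mpr ⟨w, h1, h2⟩⟩

lemma RW_split {v u : V} {r : List (A × Bool)} (h : RW src tgt cap x v r u) (s : ℕ) :
    ∃ w, RW src tgt cap x v (r.take s) w ∧ RW src tgt cap x w (r.drop s) u := by
  rw [← RW_append]; rwa [List.take_append_drop]

lemma wcost_append (r₁ r₂ : List (A × Bool)) :
    wcost f (r₁ ++ r₂) = wcost f r₁ + wcost f r₂ := by simp [wcost]

lemma wcost_eq_sum_range (f : A × Bool → ℝ) (p₀ : A × Bool) :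
    ∀ l : List (A × Bool), wcost f l = ∑ s ∈ Finset.range l.length, f (l.getD s p₀)
  | [] => by simp [wcost]
  | p :: l => by
    rw [List.length_cons, Finset.sum_range_succ']
    simp only [List.getD_cons_succ, List.getD_cons_zero]
    rw [← wcost_eq_sum_range f p₀ l]
    simp [wcost]; ring

lemma shorten [Fintype V]
    (Hc : ∀ (k : ℕ) (hk : 0 < k) (cyc : Fin k → A × Bool),
      (∀ i, IsResidual cap x (cyc i)) →
      IsCycle (rsrc src tgt) (rtgt src tgt) hk cyc →
      Function.Injective (fun i => rsrc src tgt (cyc i)) →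
      0 ≤ ∑ i, f (cyc i)) :
    ∀ (r : List (A × Bool)) (v u : V), RW src tgt cap x v r u →
      ∃ r', RW src tgt cap x v r' u ∧ r'.length < Fintype.card V ∧
        wcost f r' ≤ wcost f r := by
  suffices H : ∀ (n : ℕ) (r : List (A × Bool)) (v u : V), r.length ≤ n →
      RW src tgt cap x v r u →
      ∃ r', RW src tgt cap x v r' u ∧ r'.length < Fintype.card V ∧
        wcost f r' ≤ wcost f r by
    exact fun r v u h => H r.length r v u le_rfl h
  intro n
  induction n with
  | zero =>
    intro r v u hlen hrw
    have : r = [] := List.length_eq_zero_iff.mp (by omega)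
    subst this
    exact ⟨[], hrw, by have : 0 < Fintype.card V := Fintype.card_pos_iff.mpr ⟨v⟩; omega, le_rfl⟩
  | succ n ih =>
    intro r v u hlen hrw
    by_cases hsmall : r.length < Fintype.card V
    · exact ⟨r, hrw, hsmall, le_rfl⟩
    · push_neg at hsmall
      -- setup
      have hk0 : 0 < r.length := by
        have : 0 < Fintype.card V := Fintype.card_pos_iff.mpr ⟨v⟩
        omega
      set k := r.length with hkdef
      -- vertex sequence
      have hWex : ∀ s : ℕ, ∃ w, RW src tgt cap x v (r.take s) w ∧
          RW src tgt cap x w (r.drop s) u := fun s => RW_split hrw s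
      set W : ℕ → V := fun s => Classical.choose (hWex s) with hWdef
      have hW : ∀ s, RW src tgt cap x v (r.take s) (W s) ∧
          RW src tgt cap x (W s) (r.drop s) u := fun s => Classical.choose_spec (hWex s)
      have hstep : ∀ (s : ℕ) (hs : s < k),
          IsResidual cap x r[s] ∧ rtgt src tgt r[s] = W s ∧
            rsrc src tgt r[s] = W (s + 1) := by
        intro s hs
        have h2 := (hW s).2
        rw [List.drop_eq_getElem_cons hs] at h2
        obtain ⟨hres, htg, hrest⟩ := h2
        refine ⟨hres, htg, RW_unique hrest ?_⟩
        have := (hW (s+1)).2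
        exact this
      -- pigeonhole
      obtain ⟨a, b, hab, hWab⟩ := Fintype.exists_ne_map_eq_of_card_lt
        (fun i : Fin (Fintype.card V + 1) => W i.1) (by simp)
      have hrep : ∃ j, (∃ i, i < j ∧ W i = W j) ∧ j ≤ k := by
        rcases lt_or_gt_of_ne hab with h | h
        · exact ⟨b.1, ⟨a.1, h, hWab⟩, by have := b.2; omega⟩
        · exact ⟨a.1, ⟨b.1, h, hWab.symm⟩, by have := a.2; omega⟩
      classical
      obtain ⟨⟨i₀, hij, hWij⟩, hjk⟩ := Nat.find_spec hrep
      set j₀ := Nat.find hrep with hj₀def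
      have hdist : ∀ a b : ℕ, a < b → b < j₀ → W a ≠ W b := by
        intro a b hab hbj heq
        exact Nat.find_min hrep hbj ⟨⟨a, hab, heq⟩, by omega⟩
      set m := j₀ - i₀ with hmdef
      have hm : 0 < m := by omega
      -- the extracted simple cycle
      have hcycidx : ∀ t : Fin m, j₀ - 1 - t.1 < k := fun t => by omega
      set cyc : Fin m → A × Bool := fun t => r[j₀ - 1 - t.1]'(hcycidx t) with hcycdef
      have hcyc_src : ∀ t : Fin m, rsrc src tgt (cyc t) = W (j₀ - t.1) := by
        intro t
        have ht := t.2
        have h1 := (hstep (j₀ - 1 - t.1) (hcycidx t)).2.2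
        rw [hcycdef]
        rw [h1]
        congr 1
        omega
      have hcyc_tgt : ∀ t : Fin m, rtgt src tgt (cyc t) = W (j₀ - 1 - t.1) :=
        fun t => (hstep (j₀ - 1 - t.1) (hcycidx t)).2.1
      have hcyc_res : ∀ t : Fin m, IsResidual cap x (cyc t) :=
        fun t => (hstep (j₀ - 1 - t.1) (hcycidx t)).1
      have hcyc_cyc : IsCycle (rsrc src tgt) (rtgt src tgt) hm cyc := by
        intro t
        refine (hcyc_tgt t).trans (Eq.trans ?_ (hcyc_src _).symm)
        show W (j₀ - 1 - t.1) = W (j₀ - (t.1 + 1) % m)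
        rcases Nat.lt_or_ge (t.1 + 1) m with h | h
        · rw [Nat.mod_eq_of_lt h]
          congr 1; omega
        · have ht : t.1 + 1 = m := by have := t.2; omega
          have h0 : (t.1 + 1) % m = 0 := by simp [ht]
          rw [h0, Nat.sub_zero, show j₀ - 1 - t.1 = i₀ by omega, hWij]
      have hcyc_inj : Function.Injective (fun t : Fin m => rsrc src tgt (cyc t)) := by
        intro t t' heq
        simp only [hcyc_src] at heq
        by_contra hne
        have hne' : t.1 ≠ t'.1 := fun h => hne (Fin.ext h)
        -- wlog t.1 < t'.1
        rcases Nat.lt_or_ge t.1 t'.1 with hlt | hge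
        · rcases Nat.eq_zero_or_pos t.1 with h0 | h0
          · rw [h0] at heq
            simp only [Nat.sub_zero] at heq
            have : W i₀ = W (j₀ - t'.1) := hWij.trans heq
            exact hdist i₀ (j₀ - t'.1) (by have := t'.2; omega) (by omega) this
          · exact hdist (j₀ - t'.1) (j₀ - t.1) (by have := t'.2; omega)
              (by omega) heq.symm
        · have hlt : t'.1 < t.1 := by omega
          rcases Nat.eq_zero_or_pos t'.1 with h0 | h0
          · rw [h0] at heq
            simp only [Nat.sub_zero] at heq
            have : W i₀ = W (j₀ - t.1) := hWij.trans heq.symm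
            exact hdist i₀ (j₀ - t.1) (by have := t.2; omega) (by omega) this
          · exact hdist (j₀ - t.1) (j₀ - t'.1) (by have := t.2; omega)
              (by omega) heq
      have hcyc_cost : 0 ≤ ∑ t, f (cyc t) := Hc m hm cyc hcyc_res hcyc_cyc hcyc_inj
      -- the shortened walk
      set r' : List (A × Bool) := r.take i₀ ++ r.drop j₀ with hr'def
      have hrw' : RW src tgt cap x v r' u := by
        rw [hr'def, RW_append]
        refine ⟨W i₀, (hW i₀).1, ?_⟩
        rw [hWij]; exact (hW j₀).2
      have hlen' : r'.length = k - m := by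
        rw [hr'def]
        simp [List.length_take, List.length_drop]
        omega
      -- cost computation
      set p₀ : A × Bool := r[0]'(hk0) with hp₀def
      set mid : List (A × Bool) := (r.take j₀).drop i₀ with hmiddef
      have hmidlen : mid.length = m := by
        rw [hmiddef]; simp [List.length_drop, List.length_take]; omega
      have e1 : wcost f r = wcost f (r.take j₀) + wcost f (r.drop j₀) := by
        rw [← wcost_append, List.take_append_drop]
      have e2 : wcost f (r.take j₀) = wcost f (r.take i₀) + wcost f mid := by
        conv_lhs => rw [← List.take_append_drop i₀ (r.take j₀)]
        rw [wcost_append, List.take_take, min_eq_left (by omega : i₀ ≤ j₀), hmiddef]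
      have e3 : wcost f r' = wcost f (r.take i₀) + wcost f (r.drop j₀) := by
        rw [hr'def, wcost_append]
      have hmidget : ∀ s : ℕ, s < m → mid.getD s p₀ = r.getD (i₀ + s) p₀ := by
        intro s hs
        have hs1 : s < mid.length := by omega
        have hs2 : i₀ + s < k := by omega
        simp [hmiddef, List.getD_eq_getElem?_getD, List.getElem?_drop, List.getElem?_take,
          (by omega : i₀ + s < j₀)]
      have hmidcost : wcost f mid = ∑ t, f (cyc t) := by
        rw [wcost_eq_sum_range f p₀ mid, hmidlen]
        have hR : ∑ t : Fin m, f (cyc t)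
            = ∑ s ∈ Finset.range m, f (r.getD (j₀ - 1 - s) p₀) := by
          rw [← Fin.sum_univ_eq_sum_range (fun s => f (r.getD (j₀ - 1 - s) p₀)) m]
          apply Finset.sum_congr rfl
          intro t _
          congr 1
          show r[j₀ - 1 - t.1]'(hcycidx t) = _
          rw [List.getD_eq_getElem _ _ (hcycidx t)]
        have h1 : ∑ s ∈ Finset.range m, f (mid.getD s p₀)
            = ∑ s ∈ Finset.range m, f (r.getD (i₀ + s) p₀) :=
          Finset.sum_congr rfl (fun s hs => by rw [hmidget s (Finset.mem_range.mp hs)])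
        have h2 : ∑ s ∈ Finset.range m, f (r.getD (j₀ - 1 - s) p₀)
            = ∑ s ∈ Finset.range m, f (r.getD (i₀ + s) p₀) := by
          rw [← Finset.sum_range_reflect (fun s => f (r.getD (i₀ + s) p₀)) m]
          apply Finset.sum_congr rfl
          intro s hs
          have hsm := Finset.mem_range.mp hs
          congr 2
          omega
        rw [h1, hR, h2]
      have hcost' : wcost f r' ≤ wcost f r := by
        rw [e3, e1, e2]
        have : 0 ≤ wcost f mid := hmidcost ▸ hcyc_cost
        linarith
      obtain ⟨r'', hrw'', hlen'', hcost''⟩ := ih r' v u (by omega) hrw'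
      exact ⟨r'', hrw'', hlen'', hcost''.trans hcost'⟩
end W3
section W4
variable [Fintype A] [Fintype V] {src tgt : A → V} {cap x : A → ℤ}

lemma exists_potential (f : A × Bool → ℝ)
    (Hc : ∀ (k : ℕ) (hk : 0 < k) (cyc : Fin k → A × Bool),
      (∀ i, IsResidual cap x (cyc i)) →
      IsCycle (rsrc src tgt) (rtgt src tgt) hk cyc →
      Function.Injective (fun i => rsrc src tgt (cyc i)) →
      0 ≤ ∑ i, f (cyc i)) :
    ∃ π : V → ℝ, ∀ p : A × Bool, IsResidual cap x p →
      π (rtgt src tgt p) ≤ π (rsrc src tgt p) + f p := by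
  refine ⟨dfun src tgt cap x f (Fintype.card V), ?_⟩
  intro p hp
  obtain ⟨u, r, hrw, hlen, hc⟩ := dfun_attained (f := f) (src := src) (tgt := tgt)
    (cap := cap) (x := x) (Fintype.card V) (rsrc src tgt p)
  have hrw2 : RW src tgt cap x (rtgt src tgt p) (p :: r) u := ⟨hp, rfl, hrw⟩
  obtain ⟨r', hrw', hlen', hcost'⟩ := shorten Hc (p :: r) (rtgt src tgt p) u hrw2
  have h1 := dfun_le_wcost (f := f) hrw' (le_of_lt hlen')
  have h2 : wcost f (p :: r) = f p + wcost f r := by simp [wcost]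
  rw [h2, hc] at hcost'
  linarith
end W4
section W5

lemma shift_bijective {k : ℕ} (hk : 0 < k) :
    Function.Bijective (fun i : Fin k => (⟨(i.1 + 1) % k, Nat.mod_lt _ hk⟩ : Fin k)) := by
  rw [Finite.injective_iff_bijective.symm]
  intro i j h
  have h' : (i.1 + 1) % k = (j.1 + 1) % k := congrArg Fin.val h
  have hi := i.2; have hj := j.2
  apply Fin.ext
  rcases Nat.lt_or_ge (i.1 + 1) k with hik | hik <;>
    rcases Nat.lt_or_ge (j.1 + 1) k with hjk | hjk
  · rw [Nat.mod_eq_of_lt hik, Nat.mod_eq_of_lt hjk] at h'; omega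
  · rw [Nat.mod_eq_of_lt hik, show j.1 + 1 = k by omega, Nat.mod_self] at h'; omega
  · rw [show i.1 + 1 = k by omega, Nat.mod_self, Nat.mod_eq_of_lt hjk] at h'; omega
  · omega

lemma sum_shift {M : Type} [AddCommMonoid M] {k : ℕ} (hk : 0 < k) (F : Fin k → M) :
    ∑ i : Fin k, F ⟨(i.1 + 1) % k, Nat.mod_lt _ hk⟩ = ∑ i, F i :=
  (shift_bijective hk).sum_comp F

lemma cycle_tgt_sum {src tgt : A → V} {k : ℕ} {hk : 0 < k} {cyc : Fin k → A × Bool}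
    (hcyc : IsCycle (rsrc src tgt) (rtgt src tgt) hk cyc)
    {M : Type} [AddCommMonoid M] (F : V → M) :
    ∑ i : Fin k, F (rtgt src tgt (cyc i)) = ∑ i : Fin k, F (rsrc src tgt (cyc i)) := by
  rw [← sum_shift hk (fun i => F (rsrc src tgt (cyc i)))]
  exact Finset.sum_congr rfl fun i _ => congrArg F (hcyc i)

/-- Telescoping: sum of reduced costs around a cycle equals the sum of costs. -/
lemma cycle_redcost_sum {src tgt : A → V} {c : A → ℤ} (π : V → ℝ) {k : ℕ} {hk : 0 < k}
    {cyc : Fin k → A × Bool}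
    (hcyc : IsCycle (rsrc src tgt) (rtgt src tgt) hk cyc) :
    ∑ i : Fin k, redcost src tgt c π (cyc i) = ∑ i : Fin k, (rcost c (cyc i) : ℝ) := by
  unfold redcost
  rw [Finset.sum_sub_distrib, Finset.sum_add_distrib, cycle_tgt_sum hcyc π]
  ring

variable [Fintype A] [DecidableEq V]

/-- Conservation difference for two feasible flows. -/
lemma feasible_diff {src tgt : A → V} {b : V → ℤ} {cap x y : A → ℤ}
    (hx : IsFeasible src tgt b cap x) (hy : IsFeasible src tgt b cap y) (v : V) :
    ∑ a ∈ Finset.univ.filter (fun a => src a = v), (y a - x a) =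
      ∑ a ∈ Finset.univ.filter (fun a => tgt a = v), (y a - x a) := by
  have h1 := hx.2 v
  have h2 := hy.2 v
  unfold excess at h1 h2
  rw [Finset.sum_sub_distrib, Finset.sum_sub_distrib]
  omega

/-- Cost difference can be computed with reduced costs. -/
lemma redcost_sum_eq [Fintype V] {src tgt : A → V} {b : V → ℤ} {cap x y : A → ℤ} (c : A → ℤ)
    (hx : IsFeasible src tgt b cap x) (hy : IsFeasible src tgt b cap y) (π : V → ℝ) :
    ∑ a : A, ((c a : ℝ) + π (src a) - π (tgt a)) * ((y a : ℝ) - (x a : ℝ)) =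
      ∑ a : A, (c a : ℝ) * ((y a : ℝ) - (x a : ℝ)) := by
  have key : ∀ g : A → V,
      ∑ a : A, π (g a) * ((y a : ℝ) - (x a : ℝ)) =
        ∑ v : V, π v * ∑ a ∈ Finset.univ.filter (fun a => g a = v), ((y a : ℝ) - (x a : ℝ)) := by
    intro g
    rw [← Finset.sum_fiberwise Finset.univ g (fun a => π (g a) * ((y a : ℝ) - (x a : ℝ)))]
    apply Finset.sum_congr rfl
    intro v _
    rw [Finset.mul_sum]
    apply Finset.sum_congr rfl
    intro a ha
    rw [(Finset.mem_filter.mp ha).2]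
  have hsrc := key src
  have htgt := key tgt
  have hfib : ∀ v : V,
      (∑ a ∈ Finset.univ.filter (fun a => src a = v), ((y a : ℝ) - (x a : ℝ))) =
        ∑ a ∈ Finset.univ.filter (fun a => tgt a = v), ((y a : ℝ) - (x a : ℝ)) := by
    intro v
    have := feasible_diff hx hy v
    have := congrArg (Int.cast : ℤ → ℝ) this
    push_cast at this
    rw [← this]
  have : ∑ a : A, π (src a) * ((y a : ℝ) - (x a : ℝ)) =
      ∑ a : A, π (tgt a) * ((y a : ℝ) - (x a : ℝ)) := by
    rw [hsrc, htgt]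
    exact Finset.sum_congr rfl fun v _ => by rw [hfib v]
  have expand : ∑ a : A, ((c a : ℝ) + π (src a) - π (tgt a)) * ((y a : ℝ) - (x a : ℝ)) =
      ∑ a : A, ((c a : ℝ) * ((y a : ℝ) - (x a : ℝ))
        + π (src a) * ((y a : ℝ) - (x a : ℝ)) - π (tgt a) * ((y a : ℝ) - (x a : ℝ))) :=
    Finset.sum_congr rfl fun a _ => by ring
  rw [expand, Finset.sum_sub_distrib, Finset.sum_add_distrib, this]
  ring

/-- If there are potentials with nonnegative reduced costs, `x` is optimal. -/
lemma optimal_of_potential [Fintype V] {src tgt : A → V} {b : V → ℤ} {cap c x : A → ℤ}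
    (hx : IsFeasible src tgt b cap x) (π : V → ℝ)
    (hπ : ∀ p : A × Bool, IsResidual cap x p → 0 ≤ redcost src tgt c π p) :
    IsOptimal src tgt b cap c x := by
  refine ⟨hx, fun y hy => ?_⟩
  have hterm : ∀ a : A, 0 ≤ ((c a : ℝ) + π (src a) - π (tgt a)) * ((y a : ℝ) - (x a : ℝ)) := by
    intro a
    rcases lt_trichotomy (x a) (y a) with h | h | h
    · have hres : IsResidual cap x (a, true) := by
        simp only [IsResidual, if_true]
        exact lt_of_lt_of_le h (hy.1 a).2
      have := hπ _ hres
      simp only [redcost, rsrc, rtgt, rcost, if_true] at this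
      apply mul_nonneg this
      have : (x a : ℝ) < (y a : ℝ) := by exact_mod_cast h
      linarith
    · rw [h]; simp
    · have hres : IsResidual cap x (a, false) := by
        simp only [IsResidual, if_false]
        exact lt_of_le_of_lt (hy.1 a).1 h
      have := hπ _ hres
      simp only [redcost, rsrc, rtgt, rcost, if_false] at this
      push_cast at this
      have hyx : (y a : ℝ) < (x a : ℝ) := by exact_mod_cast h
      nlinarith
  have hsum : 0 ≤ ∑ a : A, (c a : ℝ) * ((y a : ℝ) - (x a : ℝ)) := by
    rw [← redcost_sum_eq c hx hy π]
    exact Finset.sum_nonneg fun a _ => hterm a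
  have : (flowCost c x : ℝ) ≤ (flowCost c y : ℝ) := by
    unfold flowCost
    push_cast
    have expand : ∑ a : A, (c a : ℝ) * ((y a : ℝ) - (x a : ℝ)) =
        (∑ a : A, (c a : ℝ) * (y a : ℝ)) - ∑ a : A, (c a : ℝ) * (x a : ℝ) := by
      rw [← Finset.sum_sub_distrib]
      exact Finset.sum_congr rfl fun a _ => by ring
    rw [expand] at hsum
    linarith
  exact_mod_cast this
end W5
section W6
variable [Fintype A] [DecidableEq V]

open scoped Classical in
/-- Augmenting along a negative-cost simple residual cycle improves the flow. -/
lemma not_optimal_of_negcycle {src tgt : A → V} {b : V → ℤ} {cap c x : A → ℤ}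
    (hx : IsFeasible src tgt b cap x) {k : ℕ} (hk : 0 < k) (cyc : Fin k → A × Bool)
    (hres : ∀ i, IsResidual cap x (cyc i))
    (hcyc : IsCycle (rsrc src tgt) (rtgt src tgt) hk cyc)
    (hinj : Function.Injective (fun i => rsrc src tgt (cyc i)))
    (hneg : ∑ i, rcost c (cyc i) < 0) :
    ¬ IsOptimal src tgt b cap c x := by
  have hcycinj : Function.Injective cyc := fun i j h => hinj (congrArg (rsrc src tgt) h)
  set e : A → ℤ := fun a => (if ∃ i, cyc i = (a, true) then (1:ℤ) else 0)
      - (if ∃ i, cyc i = (a, false) then (1:ℤ) else 0) with hedef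
  set y : A → ℤ := fun a => x a + e a with hydef
  have hya : ∀ a, y a = x a + e a := fun a => rfl
  have hea : ∀ a, e a = (if ∃ i, cyc i = (a, true) then (1:ℤ) else 0)
      - (if ∃ i, cyc i = (a, false) then (1:ℤ) else 0) := fun a => rfl
  -- indicator equals a sum thanks to injectivity
  have hind : ∀ q : A × Bool,
      (if ∃ i, cyc i = q then (1:ℤ) else 0) = ∑ i : Fin k, if cyc i = q then (1:ℤ) else 0 := by
    intro q
    by_cases h : ∃ i, cyc i = q
    · obtain ⟨i₀, hi₀⟩ := h
      rw [if_pos ⟨i₀, hi₀⟩, eq_comm, Finset.sum_eq_single i₀]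
      · rw [if_pos hi₀]
      · intro j _ hj
        rw [if_neg]
        exact fun hcj => hj (hcycinj (hcj.trans hi₀.symm))
      · simp
    · rw [if_neg h, eq_comm]
      exact Finset.sum_eq_zero fun j _ => by
        rw [if_neg]; exact fun hc => h ⟨j, hc⟩
  -- weighted point evaluation
  have key : ∀ (w : A → ℤ) (bb : Bool) (i : Fin k),
      (∑ a : A, w a * (if cyc i = (a, bb) then (1:ℤ) else 0)) =
        if (cyc i).2 = bb then w (cyc i).1 else 0 := by
    intro w bb i
    rw [Finset.sum_eq_single (cyc i).1]
    · by_cases hbb : (cyc i).2 = bb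
      · rw [if_pos (show cyc i = ((cyc i).1, bb) by rw [← hbb]), if_pos hbb, mul_one]
      · rw [if_neg, if_neg hbb, mul_zero]
        exact fun h => hbb (congrArg Prod.snd h)
    · intro a _ ha
      rw [if_neg, mul_zero]
      exact fun h => ha (congrArg Prod.fst h).symm
    · simp
  -- weighted sum against e
  have hwsum : ∀ (w : A → ℤ),
      ∑ a : A, w a * e a =
        ∑ i : Fin k, ((if (cyc i).2 = true then w (cyc i).1 else 0)
          - (if (cyc i).2 = false then w (cyc i).1 else 0)) := by
    intro w
    have hpt : ∀ a, w a * e a =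
        (∑ i : Fin k, w a * (if cyc i = (a, true) then (1:ℤ) else 0))
          - ∑ i : Fin k, w a * (if cyc i = (a, false) then (1:ℤ) else 0) := by
      intro a
      rw [hea a, hind (a, true), hind (a, false), mul_sub, Finset.mul_sum, Finset.mul_sum]
    rw [Finset.sum_congr rfl fun a _ => hpt a, Finset.sum_sub_distrib]
    have h1 : ∑ a : A, ∑ i : Fin k, w a * (if cyc i = (a, true) then (1:ℤ) else 0)
        = ∑ i : Fin k, (if (cyc i).2 = true then w (cyc i).1 else 0) := by
      rw [Finset.sum_comm]
      exact Finset.sum_congr rfl fun i _ => key w true i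
    have h2 : ∑ a : A, ∑ i : Fin k, w a * (if cyc i = (a, false) then (1:ℤ) else 0)
        = ∑ i : Fin k, (if (cyc i).2 = false then w (cyc i).1 else 0) := by
      rw [Finset.sum_comm]
      exact Finset.sum_congr rfl fun i _ => key w false i
    rw [h1, h2, Finset.sum_sub_distrib]
  -- feasibility of y
  have hyfeas : IsFeasible src tgt b cap y := by
    constructor
    · intro a
      have hb := hx.1 a
      by_cases h1 : ∃ i, cyc i = (a, true) <;> by_cases h2 : ∃ i, cyc i = (a, false)
      · rw [hya, hea, if_pos h1, if_pos h2]; omega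
      · have hr := hres h1.choose
        rw [h1.choose_spec] at hr
        simp only [IsResidual, if_true] at hr
        rw [hya, hea, if_pos h1, if_neg h2]; omega
      · have hr := hres h2.choose
        rw [h2.choose_spec] at hr
        simp only [IsResidual, Bool.false_eq_true, if_false] at hr
        rw [hya, hea, if_neg h1, if_pos h2]; omega
      · rw [hya, hea, if_neg h1, if_neg h2]; omega
    · intro v
      have hxv := hx.2 v
      unfold excess at hxv ⊢
      have hsplit : ∀ g : A → V,
          ∑ a ∈ Finset.univ.filter (fun a => g a = v), y a =
            (∑ a ∈ Finset.univ.filter (fun a => g a = v), x a)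
              + ∑ a : A, (if g a = v then (1:ℤ) else 0) * e a := by
        intro g
        rw [Finset.sum_congr rfl (fun a _ => hya a), Finset.sum_add_distrib]
        congr 1
        rw [Finset.sum_filter]
        exact Finset.sum_congr rfl fun a _ => by by_cases h : g a = v <;> simp [h]
      rw [hsplit tgt, hsplit src]
      have htgt := hwsum (fun a => if tgt a = v then (1:ℤ) else 0)
      have hsrcw := hwsum (fun a => if src a = v then (1:ℤ) else 0)
      have hterm : ∀ i : Fin k,
          ((if (cyc i).2 = true then (if tgt (cyc i).1 = v then (1:ℤ) else 0) else 0)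
            - (if (cyc i).2 = false then (if tgt (cyc i).1 = v then (1:ℤ) else 0) else 0))
          - ((if (cyc i).2 = true then (if src (cyc i).1 = v then (1:ℤ) else 0) else 0)
            - (if (cyc i).2 = false then (if src (cyc i).1 = v then (1:ℤ) else 0) else 0))
          = (if rtgt src tgt (cyc i) = v then (1:ℤ) else 0)
            - (if rsrc src tgt (cyc i) = v then (1:ℤ) else 0) := by
        intro i
        rcases Bool.eq_false_or_eq_true (cyc i).2 with hb | hb <;>
          simp only [rtgt, rsrc, hb, Bool.true_eq_false, Bool.false_eq_true, if_true,
            if_false, ite_true, ite_false] <;> ring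
      have hzero : (∑ i : Fin k, ((if rtgt src tgt (cyc i) = v then (1:ℤ) else 0)
          - (if rsrc src tgt (cyc i) = v then (1:ℤ) else 0))) = 0 := by
        rw [Finset.sum_sub_distrib,
          show (∑ i : Fin k, if rtgt src tgt (cyc i) = v then (1:ℤ) else 0)
            = ∑ i : Fin k, if rsrc src tgt (cyc i) = v then (1:ℤ) else 0 from
              cycle_tgt_sum hcyc (fun u => if u = v then (1:ℤ) else 0), sub_self]
      have hdiff : (∑ a : A, (if tgt a = v then (1:ℤ) else 0) * e a)
          - (∑ a : A, (if src a = v then (1:ℤ) else 0) * e a) = 0 := by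
        rw [htgt, hsrcw, ← Finset.sum_sub_distrib,
          Finset.sum_congr rfl (fun i _ => hterm i), hzero]
      omega
  -- cost strictly decreases
  have hcost : flowCost c y = flowCost c x + ∑ i, rcost c (cyc i) := by
    unfold flowCost
    rw [Finset.sum_congr rfl (fun a _ => by rw [hya a, mul_add]), Finset.sum_add_distrib]
    congr 1
    rw [hwsum c]
    apply Finset.sum_congr rfl
    intro i _
    rcases Bool.eq_false_or_eq_true (cyc i).2 with hb | hb <;>
      · have : rcost c (cyc i) = if (cyc i).2 then c (cyc i).1 else -c (cyc i).1 := rfl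
        rw [this]
        simp only [hb, Bool.true_eq_false, Bool.false_eq_true, if_true, if_false,
          ite_true, ite_false]
        ring
  intro hopt
  have := hopt.2 y hyfeas
  omega
end W6
section Main

/-- The mean-cost bound needed by `exists_potential`, specialised to `rcost`. -/
lemma redcost_ge_of_meanbound [Fintype V] [Fintype A] (src tgt : A → V) (cap c x : A → ℤ)
    (μ : ℝ)
    (Hc : ∀ (k : ℕ) (hk : 0 < k) (cyc : Fin k → A × Bool),
      (∀ i, IsResidual cap x (cyc i)) →
      IsCycle (rsrc src tgt) (rtgt src tgt) hk cyc →
      Function.Injective (fun i => rsrc src tgt (cyc i)) →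
      (k : ℝ) * μ ≤ ∑ i, (rcost c (cyc i) : ℝ)) :
    ∃ π : V → ℝ, ∀ p : A × Bool, IsResidual cap x p → μ ≤ redcost src tgt c π p := by
  obtain ⟨π, hπ⟩ := exists_potential (src := src) (tgt := tgt) (cap := cap) (x := x)
    (fun p => (rcost c p : ℝ) - μ) (by
      intro k hk cyc hres hcyc hinj
      have := Hc k hk cyc hres hcyc hinj
      rw [Finset.sum_sub_distrib, Finset.sum_const, Finset.card_univ, Fintype.card_fin,
        nsmul_eq_mul]
      linarith)
  refine ⟨π, fun p hp => ?_⟩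
  have := hπ p hp
  unfold redcost
  linarith

theorem eps_x_eq_neg_min_mean_cycle' [Fintype V] [Fintype A] [DecidableEq V]
    (src tgt : A → V) (b : V → ℤ) (cap c x : A → ℤ)
    (hx : IsFeasible src tgt b cap x) :
    (¬ IsOptimal src tgt b cap c x →
      sInf {e : ℝ | 0 ≤ e ∧ ∃ π : V → ℝ, ∀ p : A × Bool, IsResidual cap x p →
          -e ≤ redcost src tgt c π p}
        = - sInf {q : ℝ | ∃ (k : ℕ) (hk : 0 < k) (cyc : Fin k → A × Bool),
            (∀ i, IsResidual cap x (cyc i)) ∧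
            IsCycle (rsrc src tgt) (rtgt src tgt) hk cyc ∧
            Function.Injective (fun i => rsrc src tgt (cyc i)) ∧
            q = (∑ i, (rcost c (cyc i) : ℝ)) / (k : ℝ)}) ∧
    (IsOptimal src tgt b cap c x →
      sInf {e : ℝ | 0 ≤ e ∧ ∃ π : V → ℝ, ∀ p : A × Bool, IsResidual cap x p →
          -e ≤ redcost src tgt c π p} = 0) := by
  set E : Set ℝ := {e : ℝ | 0 ≤ e ∧ ∃ π : V → ℝ, ∀ p : A × Bool, IsResidual cap x p →
      -e ≤ redcost src tgt c π p} with hEdef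
  set Q : Set ℝ := {q : ℝ | ∃ (k : ℕ) (hk : 0 < k) (cyc : Fin k → A × Bool),
      (∀ i, IsResidual cap x (cyc i)) ∧
      IsCycle (rsrc src tgt) (rtgt src tgt) hk cyc ∧
      Function.Injective (fun i => rsrc src tgt (cyc i)) ∧
      q = (∑ i, (rcost c (cyc i) : ℝ)) / (k : ℝ)} with hQdef
  -- the cost bound
  set M : ℝ := ∑ a : A, |(c a : ℝ)| with hMdef
  have hM0 : 0 ≤ M := Finset.sum_nonneg fun a _ => abs_nonneg _
  have hrabs : ∀ p : A × Bool, |(rcost c p : ℝ)| ≤ M := by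
    rintro ⟨a, bb⟩
    have h1 : |(c a : ℝ)| ≤ M :=
      Finset.single_le_sum (f := fun a => |(c a : ℝ)|) (fun _ _ => abs_nonneg _)
        (Finset.mem_univ a)
    cases bb
    · have : (rcost c (a, false) : ℝ) = -(c a : ℝ) := by
        unfold rcost; push_cast; simp
      rw [this, abs_neg]; exact h1
    · have : (rcost c (a, true) : ℝ) = (c a : ℝ) := by unfold rcost; simp
      rw [this]; exact h1
  -- E is nonempty and bounded below
  have hE0 : BddBelow E := ⟨0, fun e he => he.1⟩
  have hEne : E.Nonempty := by
    refine ⟨M, hM0, fun _ => 0, fun p hp => ?_⟩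
    have h1 := hrabs p
    have h2 : redcost src tgt c (fun _ => 0) p = (rcost c p : ℝ) := by
      unfold redcost; ring
    rw [h2]
    have := neg_abs_le ((rcost c p : ℝ))
    linarith
  -- every element of E is a lower bound for means of cycles (negated)
  have hEQ : ∀ e ∈ E, ∀ q ∈ Q, -e ≤ q := by
    rintro e ⟨he0, π, hπ⟩ q ⟨k, hk, cyc, hres, hcyc, hinj, rfl⟩
    have hk' : (0:ℝ) < (k : ℝ) := by exact_mod_cast hk
    rw [le_div_iff₀ hk']
    have hsum : ∑ i : Fin k, redcost src tgt c π (cyc i) = ∑ i, (rcost c (cyc i) : ℝ) :=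
      cycle_redcost_sum π hcyc
    have hlow : ∑ i : Fin k, (-e) ≤ ∑ i : Fin k, redcost src tgt c π (cyc i) :=
      Finset.sum_le_sum fun i _ => hπ (cyc i) (hres i)
    rw [Finset.sum_const, Finset.card_univ, Fintype.card_fin, nsmul_eq_mul] at hlow
    rw [hsum] at hlow
    linarith [hlow]
  -- Q is bounded below
  have hQbdd : BddBelow Q := by
    refine ⟨-M, ?_⟩
    rintro q ⟨k, hk, cyc, hres, hcyc, hinj, rfl⟩
    have hk' : (0:ℝ) < (k : ℝ) := by exact_mod_cast hk
    rw [le_div_iff₀ hk']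
    have : ∑ i : Fin k, (-M) ≤ ∑ i, (rcost c (cyc i) : ℝ) :=
      Finset.sum_le_sum fun i _ => by
        have := hrabs (cyc i); have := neg_abs_le ((rcost c (cyc i) : ℝ)); linarith
    rw [Finset.sum_const, Finset.card_univ, Fintype.card_fin, nsmul_eq_mul] at this
    linarith
  constructor
  · -- non-optimal case
    intro hnopt
    -- there is a negative mean cycle
    have hexneg : ∃ q ∈ Q, q < 0 := by
      by_contra h
      push_neg at h
      apply hnopt
      obtain ⟨π, hπ⟩ := redcost_ge_of_meanbound src tgt cap c x 0 (by
        intro k hk cyc hres hcyc hinj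
        have hk' : (0:ℝ) < (k : ℝ) := by exact_mod_cast hk
        have hq : ((∑ i, (rcost c (cyc i) : ℝ)) / (k : ℝ)) ∈ Q :=
          ⟨k, hk, cyc, hres, hcyc, hinj, rfl⟩
        have := h _ hq
        rw [le_div_iff₀ hk'] at this
        linarith)
      exact optimal_of_potential hx π fun p hp => hπ p hp
    obtain ⟨q₀, hq₀Q, hq₀⟩ := hexneg
    have hQne : Q.Nonempty := ⟨q₀, hq₀Q⟩
    have hμneg : sInf Q < 0 := lt_of_le_of_lt (csInf_le hQbdd hq₀Q) hq₀
    -- -sInf Q belongs to E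
    have hmem : -sInf Q ∈ E := by
      obtain ⟨π, hπ⟩ := redcost_ge_of_meanbound src tgt cap c x (sInf Q) (by
        intro k hk cyc hres hcyc hinj
        have hk' : (0:ℝ) < (k : ℝ) := by exact_mod_cast hk
        have hq : ((∑ i, (rcost c (cyc i) : ℝ)) / (k : ℝ)) ∈ Q :=
          ⟨k, hk, cyc, hres, hcyc, hinj, rfl⟩
        have hle : sInf Q ≤ (∑ i, (rcost c (cyc i) : ℝ)) / (k : ℝ) := csInf_le hQbdd hq
        rw [le_div_iff₀ hk'] at hle
        linarith)
      exact ⟨by linarith, π, fun p hp => by have := hπ p hp; linarith⟩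
    refine le_antisymm (csInf_le hE0 hmem) (le_csInf hEne fun e he => ?_)
    have : -e ≤ sInf Q := le_csInf hQne fun q hq => hEQ e he q hq
    linarith
  · -- optimal case
    intro hopt
    have h0mem : (0:ℝ) ∈ E := by
      obtain ⟨π, hπ⟩ := redcost_ge_of_meanbound src tgt cap c x 0 (by
        intro k hk cyc hres hcyc hinj
        have hk' : (0:ℝ) < (k : ℝ) := by exact_mod_cast hk
        by_contra hcon
        push_neg at hcon
        have hZ : (∑ i, rcost c (cyc i) : ℤ) < 0 := by
          have : ((∑ i, rcost c (cyc i) : ℤ) : ℝ) < 0 := by push_cast; linarith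
          exact_mod_cast this
        exact not_optimal_of_negcycle hx hk cyc hres hcyc hinj hZ hopt)
      exact ⟨le_refl 0, π, fun p hp => by have := hπ p hp; linarith⟩
    exact le_antisymm (csInf_le hE0 h0mem) (le_csInf hEne fun e he => he.1)
end Main


/-- for a non-optimal feasible flow, the smallest `ε ≥ 0` for which it
is `ε`-optimal is the negative of the minimum mean cost of a residual directed
cycle; for an optimal flow this value is `0`. -/
theorem eps_x_eq_neg_min_mean_cycle [Fintype V] [Fintype A] [DecidableEq V]
    (src tgt : A → V) (b : V → ℤ) (cap c x : A → ℤ)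
    (hx : IsFeasible src tgt b cap x) :
    (¬ IsOptimal src tgt b cap c x →
      sInf {e : ℝ | 0 ≤ e ∧ ∃ π : V → ℝ, ∀ p : A × Bool, IsResidual cap x p →
          -e ≤ redcost src tgt c π p}
        = - sInf {q : ℝ | ∃ (k : ℕ) (hk : 0 < k) (cyc : Fin k → A × Bool),
            (∀ i, IsResidual cap x (cyc i)) ∧
            IsCycle (rsrc src tgt) (rtgt src tgt) hk cyc ∧
            Function.Injective (fun i => rsrc src tgt (cyc i)) ∧
            q = (∑ i, (rcost c (cyc i) : ℝ)) / (k : ℝ)}) ∧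
    (IsOptimal src tgt b cap c x →
      sInf {e : ℝ | 0 ≤ e ∧ ∃ π : V → ℝ, ∀ p : A × Bool, IsResidual cap x p →
          -e ≤ redcost src tgt c π p} = 0) :=
  eps_x_eq_neg_min_mean_cycle' src tgt b cap c x hx
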